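/- The number of canonical labeled binary trees with n nodes is the n-th Catalan number. -/

import Mathlib

/-- Binary trees: each node has a (possibly empty) left subtree, a label, and a
(possibly empty) right subtree. -/
inductive BTree where
  | leaf : BTree
  | node : BTree → ℕ → BTree → BTree

/-- The in-order reading word of the labels of a binary tree. -/
def BTree.labels : BTree → List ℕ
  | .leaf => []
  | .node l x r => l.labels ++ x :: r.labels

/-- Labels increase from the root towards the leaves. -/
def BTree.Incr : BTree → Prop
  | .leaf => True
  | .node l x r => (∀ y ∈ l.labels, x < y) ∧ (∀ y ∈ r.labels, x < y) ∧ l.Incr ∧ r.Incr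

/-- A labeled binary tree with `n` nodes: labels are exactly `{1,...,n}`, each used once,
increasing from the root to the leaves. -/
def IsLabeledBTree (n : ℕ) (t : BTree) : Prop :=
  t.labels.Perm (List.range' 1 n) ∧ t.Incr

/-- The node labeled `b` is weakly right of the node labeled `a`: `b` is a descendant of `a`,
or the paths to the root branch with `a` on the left and `b` on the right. -/
def BTree.WeaklyRight : BTree → ℕ → ℕ → Prop
  | .leaf, _, _ => False
  | .node l x r, a, b =>
      (x = a ∧ (b ∈ l.labels ∨ b ∈ r.labels)) ∨
      (a ∈ l.labels ∧ b ∈ r.labels) ∨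
      l.WeaklyRight a b ∨ r.WeaklyRight a b

/-- A labeled binary tree is canonical if, for every `i`, the node labeled `i + 1`
is weakly right of the node labeled `i`. -/
def BTree.Canonical (t : BTree) : Prop :=
  ∀ i : ℕ, i ∈ t.labels → i + 1 ∈ t.labels → t.WeaklyRight i (i + 1)

/-! ### Auxiliary development -/


/-- The shape of a labeled binary tree. -/
def BTree.shape : BTree → Tree Unit
  | .leaf => Tree.nil
  | .node l _ r => Tree.node () l.shape r.shape

/-- The canonical labeling of a tree shape, with labels starting at `s`. -/
def lab : Tree Unit → ℕ → BTree
  | BinaryTree.nil, _ => .leaf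
  | BinaryTree.node _ l r, s => .node (lab l (s + 1)) s (lab r (s + 1 + l.numNodes))

lemma shape_lab : ∀ (u : Tree Unit) (s : ℕ), (lab u s).shape = u := by
  intro u
  induction u with
  | nil => intro s; rfl
  | node _ l r ihl ihr => intro s; simp [lab, BTree.shape, ihl, ihr]

lemma labels_lab_perm : ∀ (u : Tree Unit) (s : ℕ),
    (lab u s).labels.Perm (List.range' s u.numNodes) := by
  intro u
  induction u with
  | nil => intro s; simp [lab, BTree.labels, Tree.numNodes]
  | node _ l r ihl ihr =>
    intro s
    show ((lab l (s+1)).labels ++ s :: (lab r (s+1+l.numNodes)).labels).Perm _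
    refine List.perm_middle.trans ?_
    have h1 := (ihl (s+1)).append (ihr (s+1+l.numNodes))
    refine (List.Perm.cons s h1).trans ?_
    have h2 : List.range' (s+1) l.numNodes ++ List.range' (s+1+l.numNodes) r.numNodes
        = List.range' (s+1) (r.numNodes + l.numNodes) := by
      have := List.range'_append (s := s+1) (m := l.numNodes) (n := r.numNodes) (step := 1)
      simpa [Nat.one_mul, Nat.add_comm] using this
    rw [h2]
    have h3 : Tree.numNodes (Tree.node () l r) = (r.numNodes + l.numNodes) + 1 := by
      simp [Tree.numNodes]; omega
    rw [h3, List.range'_succ]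

lemma mem_labels_lab {u : Tree Unit} {s i : ℕ} :
    i ∈ (lab u s).labels ↔ s ≤ i ∧ i < s + u.numNodes := by
  rw [(labels_lab_perm u s).mem_iff, List.mem_range'_1]

lemma length_labels_lab (u : Tree Unit) (s : ℕ) : (lab u s).labels.length = u.numNodes := by
  simpa using (labels_lab_perm u s).length_eq

lemma incr_lab : ∀ (u : Tree Unit) (s : ℕ), (lab u s).Incr := by
  intro u
  induction u with
  | nil => intro s; trivial
  | node _ l r ihl ihr =>
    intro s
    refine ⟨?_, ?_, ihl _, ihr _⟩
    · intro y hy; exact lt_of_lt_of_le (by omega) (mem_labels_lab.mp hy).1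
    · intro y hy; exact lt_of_lt_of_le (by omega) (mem_labels_lab.mp hy).1

lemma canonical_lab : ∀ (u : Tree Unit) (s : ℕ), (lab u s).Canonical := by
  intro u
  induction u with
  | nil => intro s i hi; simp [lab, BTree.labels] at hi
  | node _ l r ihl ihr =>
    intro s i hi hi1
    have hm := mem_labels_lab.mp hi
    have hm1 := mem_labels_lab.mp hi1
    have hnn : Tree.numNodes (Tree.node () l r) = l.numNodes + r.numNodes + 1 := by
      simp [Tree.numNodes]
    rw [hnn] at hm hm1
    show (s = i ∧ _) ∨ _ ∨ _ ∨ _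
    rcases eq_or_lt_of_le hm.1 with heq | hlt
    · left
      refine ⟨heq, ?_⟩
      have h5 : i + 1 ∈ (lab l (s+1)).labels ++ s :: (lab r (s+1+l.numNodes)).labels := hi1
      rcases List.mem_append.mp h5 with h | h
      · exact Or.inl h
      · rcases List.mem_cons.mp h with h | h
        · omega
        · exact Or.inr h
    · by_cases hA : i + 1 ≤ s + l.numNodes
      · refine Or.inr (Or.inr (Or.inl (ihl (s+1) i ?_ ?_))) <;>
          · rw [mem_labels_lab]; simp only [Tree.numNodes, Tree.node, BinaryTree.numNodes] at *; omega
      · by_cases hB : i = s + l.numNodes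
        · refine Or.inr (Or.inl ⟨?_, ?_⟩) <;> · rw [mem_labels_lab]; simp only [Tree.numNodes, Tree.node, BinaryTree.numNodes] at *; omega
        · refine Or.inr (Or.inr (Or.inr (ihr (s+1+l.numNodes) i ?_ ?_))) <;>
            · rw [mem_labels_lab]; simp only [Tree.numNodes, Tree.node, BinaryTree.numNodes] at *; omega

lemma weaklyRight_mem : ∀ {t : BTree} {a b : ℕ},
    t.WeaklyRight a b → a ∈ t.labels ∧ b ∈ t.labels := by
  intro t
  induction t with
  | leaf => intro a b h; exact h.elim
  | node l x r ihl ihr =>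
    intro a b h
    have hlab : (BTree.node l x r).labels = l.labels ++ x :: r.labels := rfl
    rw [hlab]
    rcases h with ⟨rfl, hb | hb⟩ | ⟨ha, hb⟩ | h | h
    · exact ⟨by simp, by simp [hb]⟩
    · exact ⟨by simp, by simp [hb]⟩
    · exact ⟨by simp [ha], by simp [hb]⟩
    · obtain ⟨h1, h2⟩ := ihl h; exact ⟨by simp [h1], by simp [h2]⟩
    · obtain ⟨h1, h2⟩ := ihr h; exact ⟨by simp [h1], by simp [h2]⟩

lemma upclosed_eq_Ico {S : Finset ℕ} {a b : ℕ} (hsub : ∀ i ∈ S, a ≤ i ∧ i < b)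
    (hcl : ∀ i ∈ S, i + 1 < b → i + 1 ∈ S) : S = Finset.Ico (b - S.card) b := by
  rcases S.eq_empty_or_nonempty with h | h
  · subst h; simp
  · set j0 := S.min' h with hj0
    have hj0S : j0 ∈ S := S.min'_mem h
    have hj0b : j0 < b := (hsub _ hj0S).2
    have hup : ∀ j, j0 ≤ j → j < b → j ∈ S := by
      intro j hj
      induction j, hj using Nat.le_induction with
      | base => intro _; exact hj0S
      | succ n hn ih => intro hb; exact hcl n (ih (by omega)) hb
    have hSeq : S = Finset.Ico j0 b := by
      apply Finset.ext; intro i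
      simp only [Finset.mem_Ico]
      constructor
      · intro hi; exact ⟨S.min'_le i hi, (hsub i hi).2⟩
      · rintro ⟨h1, h2⟩; exact hup i h1 h2
    have hcard : S.card = b - j0 := by rw [hSeq, Nat.card_Ico]
    rw [hcard, hSeq]
    congr 1
    omega

lemma eq_lab : ∀ (t : BTree) (s m : ℕ), t.labels.Perm (List.range' s m) →
    t.Incr → t.Canonical → t = lab t.shape s := by
  intro t
  induction t with
  | leaf => intro s m _ _ _; rfl
  | node l x r ihl ihr =>
    intro s m hp hi hc
    obtain ⟨hxl, hxr, hil, hir⟩ := hi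
    have hlab : (BTree.node l x r).labels = l.labels ++ x :: r.labels := rfl
    have hn : (BTree.node l x r).labels.Nodup := hp.nodup_iff.mpr (List.nodup_range' (s := s) (n := m))
    rw [hlab, List.nodup_append] at hn
    obtain ⟨hnl, hnxr, hdisj⟩ := hn
    have hxnr : x ∉ r.labels := (List.nodup_cons.mp hnxr).1
    have hnr : r.labels.Nodup := (List.nodup_cons.mp hnxr).2
    have hdlr : ∀ y, y ∈ l.labels → y ∉ r.labels := by
      intro y hy hy'
      exact hdisj y hy y (List.mem_cons_of_mem _ hy') rfl
    have hdlx : x ∉ l.labels := fun hx => hdisj x hx x List.mem_cons_self rfl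
    have hmem : ∀ y, y ∈ (BTree.node l x r).labels ↔ s ≤ y ∧ y < s + m := by
      intro y; rw [hp.mem_iff, List.mem_range'_1]
    have hxmem : x ∈ (BTree.node l x r).labels := by rw [hlab]; simp
    have hm1 : 1 ≤ m := by
      have := (hmem x).mp hxmem; omega
    have hxs : s = x := by
      by_contra hne
      have hs : s ∈ (BTree.node l x r).labels := by rw [hmem]; omega
      rw [hlab] at hs
      have hxs' : x < s := by
        rcases List.mem_append.mp hs with h | h
        · exact hxl s h
        · rcases List.mem_cons.mp h with h | h
          · omega
          · exact hxr s h
      have := ((hmem x).mp hxmem).1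
      omega
    subst hxs
    set kl := l.labels.length with hkl
    set q := r.labels.length with hq
    have hmlen : kl + 1 + q = m := by
      have := hp.length_eq
      rw [hlab] at this
      simp at this
      omega
    -- r.labels is upward closed
    have hstep : ∀ i ∈ r.labels, i + 1 < s + m → i + 1 ∈ r.labels := by
      intro i hi hib
      have hsi : s < i := hxr i hi
      have h1 : i ∈ (BTree.node l s r).labels := by rw [hlab]; simp [hi]
      have h2 : i + 1 ∈ (BTree.node l s r).labels := by rw [hmem]; omega
      rcases hc i h1 h2 with ⟨hsx, _⟩ | ⟨ha, hb⟩ | h | h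
      · omega
      · exact absurd hi (hdlr i ha)
      · exact absurd hi (hdlr i (weaklyRight_mem h).1)
      · exact (weaklyRight_mem h).2
    have hScard : r.labels.toFinset.card = q := List.toFinset_card_of_nodup hnr
    have hSeq : r.labels.toFinset = Finset.Ico (s + m - q) (s + m) := by
      rw [← hScard]
      apply upclosed_eq_Ico (a := s + 1)
      · intro i hi
        rw [List.mem_toFinset] at hi
        have h4 := hxr i hi
        have h5 := (hmem i).mp (by rw [hlab]; simp [hi])
        omega
      · intro i hi hib
        rw [List.mem_toFinset] at hi ⊢
        exact hstep i hi hib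
    have hrperm : r.labels.Perm (List.range' (s + m - q) q) := by
      apply List.perm_of_nodup_nodup_toFinset_eq hnr List.nodup_range'
      rw [hSeq]
      ext i
      simp only [List.mem_toFinset, List.mem_range'_1, Finset.mem_Ico]
      omega
    -- left labels via multisets
    have hlperm : l.labels.Perm (List.range' (s + 1) kl) := by
      rw [← Multiset.coe_eq_coe]
      have hp' : ((l.labels : Multiset ℕ) + {s}) + (r.labels : Multiset ℕ)
          = ((List.range' s (kl + 1) : List ℕ) : Multiset ℕ)
            + ((List.range' (s + m - q) q : List ℕ) : Multiset ℕ) := by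
        have hco : ((l.labels ++ s :: r.labels : List ℕ) : Multiset ℕ)
            = ((List.range' s m : List ℕ) : Multiset ℕ) := by
          rw [Multiset.coe_eq_coe]; rw [hlab] at hp; exact hp
        have hsplit : ((List.range' s m : List ℕ) : Multiset ℕ)
            = ((List.range' s (kl + 1) : List ℕ) : Multiset ℕ)
              + ((List.range' (s + m - q) q : List ℕ) : Multiset ℕ) := by
          have h6 := List.range'_append (s := s) (m := kl + 1) (n := q) (step := 1)
          rw [show s + 1 * (kl + 1) = s + m - q by omega,
            show kl + 1 + q = m by omega] at h6
          rw [← h6]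
          rfl
        rw [← hsplit, ← hco]
        show _ = ((l.labels : Multiset ℕ) + ((s :: r.labels : List ℕ) : Multiset ℕ))
        rw [show ((s :: r.labels : List ℕ) : Multiset ℕ) = s ::ₘ (r.labels : Multiset ℕ) from rfl]
        rw [add_assoc, Multiset.singleton_add]
      rw [Multiset.coe_eq_coe.mpr hrperm] at hp'
      have hcancel := add_right_cancel hp'
      rw [List.range'_succ] at hcancel
      rw [add_comm, Multiset.singleton_add] at hcancel
      rw [show ((s :: List.range' (s + 1) kl : List ℕ) : Multiset ℕ)
        = s ::ₘ ((List.range' (s + 1) kl : List ℕ) : Multiset ℕ) from rfl] at hcancel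
      exact (Multiset.cons_inj_right s).mp hcancel
    -- canonicity restricts
    have hcl : l.Canonical := by
      intro i h1 h2
      have h1' : i ∈ (BTree.node l s r).labels := by rw [hlab]; simp [h1]
      have h2' : i + 1 ∈ (BTree.node l s r).labels := by rw [hlab]; simp [h2]
      rcases hc i h1' h2' with ⟨hsx, _⟩ | ⟨ha, hb⟩ | h | h
      · have := hxl i h1; omega
      · exact absurd hb (hdlr (i+1) h2)
      · exact h
      · exact absurd (weaklyRight_mem h).1 (fun hh => hdlr i h1 hh)
    have hcr : r.Canonical := by
      intro i h1 h2
      have h1' : i ∈ (BTree.node l s r).labels := by rw [hlab]; simp [h1]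
      have h2' : i + 1 ∈ (BTree.node l s r).labels := by rw [hlab]; simp [h2]
      rcases hc i h1' h2' with ⟨hsx, _⟩ | ⟨ha, hb⟩ | h | h
      · have := hxr i h1; omega
      · exact absurd h1 (hdlr i ha)
      · exact absurd h1 (hdlr i (weaklyRight_mem h).1)
      · exact h
    have hleq := ihl (s + 1) kl hlperm hil hcl
    have hreq := ihr (s + m - q) q hrperm hir hcr
    show BTree.node l s r
        = BTree.node (lab l.shape (s + 1)) s (lab r.shape (s + 1 + l.shape.numNodes))
    have hshapenn : l.shape.numNodes = kl := by
      have h7 := length_labels_lab l.shape (s + 1)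
      rw [← hleq] at h7
      rw [hkl, ← h7]
    rw [hshapenn, show s + 1 + kl = s + m - q by omega]
    rw [← hleq, ← hreq]

/-- The number of canonical labeled binary trees with `n` nodes is the `n`-th
Catalan number. -/
theorem canonicalBTree_card (n : ℕ) :
    {t : BTree | IsLabeledBTree n t ∧ t.Canonical}.ncard = catalan n := by
  have hset : {t : BTree | IsLabeledBTree n t ∧ t.Canonical}
      = (fun u : Tree Unit => lab u 1) '' ↑(Tree.treesOfNumNodesEq n) := by
    ext t
    simp only [Set.mem_setOf_eq, Set.mem_image, Finset.mem_coe,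
      BinaryTree.mem_treesOfNumNodesEq]
    constructor
    · rintro ⟨⟨hp, hi⟩, hc⟩
      refine ⟨t.shape, ?_, (eq_lab t 1 n hp hi hc).symm⟩
      have heq := eq_lab t 1 n hp hi hc
      have hlen : t.labels.length = n := by simpa using hp.length_eq
      rw [heq, length_labels_lab] at hlen
      exact hlen
    · rintro ⟨u, hu, rfl⟩
      exact ⟨⟨hu ▸ labels_lab_perm u 1, incr_lab u 1⟩, canonical_lab u 1⟩
  rw [hset, Set.ncard_image_of_injOn, Set.ncard_coe_finset,
    BinaryTree.treesOfNumNodesEq_card_eq_catalan]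
  intro u1 _ u2 _ h
  have := congrArg BTree.shape h
  rwa [shape_lab, shape_lab] at this
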